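/- arXiv:1606.01214 — 2 statements merged into one kernel-verified Lean document; each statement's English description precedes it below -/
import Mathlib

section
/- Fix λ ∈ (0,1), C > 0, and p ∈ (0,1). Let (a_n)_{n∈ℕ} be a sequence of non-negative real numbers satisfying the restricted subadditivity condition a_{n+m} ≤ a_n + a_m + C n^p for all n, m ∈ ℕ with n^p ≤ m ≤ λ n, together with a_n ≤ C n for all n ∈ ℕ. Then the limit lim_{n→∞} a_n / n exists and is finite. -/
set_option maxHeartbeats 1000000
open Filter Real

private lemma ev_rpow_ge (r c : ℝ) (hr : 0 < r) : ∀ᶠ x : ℝ in atTop, c ≤ x ^ r :=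
  (tendsto_rpow_atTop hr).eventually_ge_atTop c

private lemma ev_linear_le_rpow (r c d : ℝ) (hr : 1 < r) :
    ∀ᶠ x : ℝ in atTop, c * x + d ≤ x ^ r := by
  filter_upwards [ev_rpow_ge (r - 1) (c + |d|) (by linarith), eventually_ge_atTop (1:ℝ)]
    with x h1 hx
  have hx0 : (0:ℝ) < x := lt_of_lt_of_le one_pos hx
  have hxr : x ^ r = x ^ (1:ℝ) * x ^ (r - 1) := by
    rw [← Real.rpow_add hx0]; ring_nf
  rw [hxr, Real.rpow_one]
  have h2 : c * x + d ≤ (c + |d|) * x := by nlinarith [le_abs_self d, abs_nonneg d]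
  have h3 : (c + |d|) * x ≤ x ^ (r - 1) * x := by
    exact mul_le_mul_of_nonneg_right h1 hx0.le
  linarith

private lemma decomp (m Smin N : ℕ) (hm : 1 ≤ m) (h : Smin ≤ N) :
    ∃ k S0 : ℕ, N = S0 + k * m ∧ Smin ≤ S0 ∧ S0 < Smin + m := by
  refine ⟨(N - Smin) / m, Smin + (N - Smin) % m, ?_, by omega, ?_⟩
  · have h1 := Nat.mod_add_div (N - Smin) m
    have : (N - Smin) / m * m = m * ((N - Smin) / m) := Nat.mul_comm _ _
    omega
  · have := Nat.mod_lt (N - Smin) (show 0 < m by omega)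
    omega

private lemma core {lam C p : ℝ} (hlam0 : 0 < lam) (hp0 : 0 < p) (hC : 0 ≤ C)
    {a : ℕ → ℝ}
    (hsub : ∀ n m : ℕ, 1 ≤ n → 1 ≤ m → (n : ℝ) ^ p ≤ (m : ℝ) → (m : ℝ) ≤ lam * n →
      a (n + m) ≤ a n + a m + C * (n : ℝ) ^ p) :
    ∀ (k n S0 : ℕ), 1 ≤ n → 1 ≤ S0 → (n : ℝ) ≤ lam * S0 →
      ((S0 + k * n : ℕ) : ℝ) ^ p ≤ (n : ℝ) →
      a (S0 + k * n) ≤ a S0 + k * a n + C * k * ((S0 + k * n : ℕ) : ℝ) ^ p := by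
  intro k
  induction k with
  | zero => intro n S0 _ _ _ _; simp
  | succ k IH =>
    intro n S0 hn hS0 hlam hpow
    have hrw : S0 + (k+1) * n = (S0 + k * n) + n := by ring
    rw [hrw] at hpow ⊢
    have hle : S0 + k * n ≤ S0 + k * n + n := Nat.le_add_right _ _
    have hmono : ((S0 + k * n : ℕ) : ℝ) ^ p ≤ ((S0 + k * n + n : ℕ) : ℝ) ^ p := by
      apply Real.rpow_le_rpow (by positivity) (by exact_mod_cast hle) hp0.le
    have hpow' : ((S0 + k * n : ℕ) : ℝ) ^ p ≤ (n : ℝ) := hmono.trans hpow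
    have hstep : a ((S0 + k*n) + n) ≤ a (S0 + k*n) + a n + C * ((S0 + k*n : ℕ):ℝ)^p := by
      apply hsub (S0 + k*n) n (by omega) hn hpow'
      calc (n:ℝ) ≤ lam * S0 := hlam
        _ ≤ lam * (S0 + k*n : ℕ) := by
            apply mul_le_mul_of_nonneg_left _ hlam0.le
            exact_mod_cast Nat.le_add_right _ _
    have hIH := IH n S0 hn hS0 hlam hpow'
    have hcast : ((k+1 : ℕ) : ℝ) = (k:ℝ) + 1 := by push_cast; ring
    rw [hcast]
    have hk0 : (0:ℝ) ≤ (k:ℝ) := Nat.cast_nonneg k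
    nlinarith [mul_nonneg hC (sub_nonneg.2 hmono),
      mul_nonneg (mul_nonneg hC hk0) (sub_nonneg.2 hmono)]




/-- **restricted Fekete lemma.** If `(a_n)` is a sequence of non-negative
reals with `a_{n+m} ≤ a_n + a_m + C n^p` whenever `n^p ≤ m ≤ λ n`, and `a_n ≤ C n` for all
`n`, then `lim_{n→∞} a_n / n` exists (and is finite). -/
theorem restricted_subadditive_limit (lam C p : ℝ) (hlam0 : 0 < lam) (hlam1 : lam < 1)
    (hC : 0 < C) (hp0 : 0 < p) (hp1 : p < 1) (a : ℕ → ℝ) (ha : ∀ n, 0 ≤ a n)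
    (hsub : ∀ n m : ℕ, 1 ≤ n → 1 ≤ m → (n : ℝ) ^ p ≤ (m : ℝ) → (m : ℝ) ≤ lam * n →
      a (n + m) ≤ a n + a m + C * (n : ℝ) ^ p)
    (hlin : ∀ n : ℕ, 1 ≤ n → a n ≤ C * n) :
    ∃ l : ℝ, Filter.Tendsto (fun n : ℕ => a n / n) Filter.atTop (nhds l) := by
  have hb0 : ∀ n : ℕ, 0 ≤ a n / (n : ℝ) := fun n => div_nonneg (ha n) (Nat.cast_nonneg n)
  have hbC : ∀ n : ℕ, a n / (n : ℝ) ≤ C := by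
    intro n
    match n with
    | 0 => simpa using hC.le
    | (k+1) =>
      rw [div_le_iff₀ (by positivity)]
      have := hlin (k+1) (by omega)
      linarith
  have hbdd_le : Filter.IsBoundedUnder (· ≤ ·) Filter.atTop (fun n : ℕ => a n / n) :=
    isBoundedUnder_of ⟨C, hbC⟩
  have hbdd_ge : Filter.IsBoundedUnder (· ≥ ·) Filter.atTop (fun n : ℕ => a n / n) :=
    isBoundedUnder_of ⟨0, hb0⟩
  set L := Filter.liminf (fun n : ℕ => a n / n) Filter.atTop with hLdef
  have hL0 : 0 ≤ L :=
    Filter.le_liminf_of_le hbdd_le.isCoboundedUnder_ge (Filter.Eventually.of_forall hb0)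
  have key : ∀ ε : ℝ, 0 < ε → ∀ᶠ N : ℕ in Filter.atTop, a N / N ≤ L + ε := by
    intro ε hε
    have hq0 : (0:ℝ) < (1+p)/2 := by linarith
    set q : ℝ := (1+p)/2 with hqdef
    have hpq : p < q := by rw [hqdef]; linarith
    have hq1 : q < 1 := by rw [hqdef]; linarith
    have h1q : (0:ℝ) < 1 - q := by linarith
    have hq2p : (0:ℝ) < q^2 - p := by rw [hqdef]; nlinarith [sq_nonneg (1-p)]
    have hqp1 : 1 < q / p := (one_lt_div hp0).2 hpq
    set t : ℝ := min 1 (ε/(12*C)) with htdef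
    have ht0 : 0 < t := lt_min one_pos (by positivity)
    have ht1 : t ≤ 1 := min_le_left _ _
    have htε : t ≤ ε/(12*C) := min_le_right _ _
    -- thresholds for N in the induction
    have hbig : ∀ᶠ x : ℝ in atTop, ((1 ≤ x ∧ 4 ≤ x) ∧ 12/ε ≤ x^(1-q) ∧
        8*(1+1/lam) ≤ x^(1-q) ∧ 8 ≤ x^((1-q)^2) ∧ 2*C ≤ x^(q^2-p)) := by
      filter_upwards [eventually_ge_atTop (1:ℝ), eventually_ge_atTop (4:ℝ),
        ev_rpow_ge (1-q) (12/ε) h1q, ev_rpow_ge (1-q) (8*(1+1/lam)) h1q,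
        ev_rpow_ge ((1-q)^2) 8 (by positivity), ev_rpow_ge (q^2-p) (2*C) hq2p]
        with x a1 a2 a3 a4 a5 a6
      exact ⟨⟨a1,a2⟩,a3,a4,a5,a6⟩
    obtain ⟨x₁, hx₁⟩ := Filter.eventually_atTop.1 hbig
    set x₂ : ℝ := max x₁ 1 with hx₂def
    have hx₂ : ∀ x : ℝ, x₂ ≤ x →
        ((1 ≤ x ∧ 4 ≤ x) ∧ 12/ε ≤ x^(1-q) ∧ 8*(1+1/lam) ≤ x^(1-q) ∧
          8 ≤ x^((1-q)^2) ∧ 2*C ≤ x^(q^2-p)) :=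
      fun x hx => hx₁ x (le_trans (le_max_left _ _) hx)
    have hx₂1 : (1:ℝ) ≤ x₂ := le_max_right _ _
    -- conditions on the good block n, eventually
    set c₁ : ℝ := 36*C/(lam*ε) + 3/lam with hc₁def
    set d₁ : ℝ := x₂ + 3 with hd₁def
    have hc₁0 : 0 ≤ c₁ := by rw [hc₁def]; positivity
    have hT : (0:ℝ) < t ^ (q/p) := Real.rpow_pos_of_pos ht0 _
    have hev2 : ∀ᶠ x : ℝ in atTop, c₁ * x + d₁ ≤ (t*x)^(q/p) := by
      filter_upwards [ev_linear_le_rpow (q/p) (c₁ / t^(q/p)) (d₁ / t^(q/p)) hqp1,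
        eventually_ge_atTop (0:ℝ)] with x hx hx0
      have hmul : (t*x)^(q/p) = t^(q/p) * x^(q/p) := Real.mul_rpow ht0.le hx0
      have h2 := mul_le_mul_of_nonneg_left hx hT.le
      have heq : t^(q/p) * (c₁/t^(q/p)*x + d₁/t^(q/p)) = c₁*x + d₁ := by
        field_simp
      rw [heq] at h2
      rw [hmul]
      exact h2
    have hev3 : ∀ᶠ x : ℝ in atTop, x₂ ≤ (t*x)^(1/p) :=
      (((tendsto_rpow_atTop (by positivity : (0:ℝ) < 1/p)).comp
        (tendsto_id.const_mul_atTop ht0)).eventually_ge_atTop x₂)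
    have hevN : ∀ᶠ n : ℕ in atTop,
        ((c₁*(n:ℝ) + d₁ ≤ (t*(n:ℝ))^(q/p) ∧ x₂ ≤ (t*(n:ℝ))^(1/p)) ∧ 1 ≤ n) :=
      ((tendsto_natCast_atTop_atTop (R := ℝ)).eventually (hev2.and hev3)).and
        (eventually_ge_atTop 1)
    have hfreq : ∃ᶠ n : ℕ in Filter.atTop, a n / n < L + ε/4 :=
      Filter.frequently_lt_of_liminf_lt hbdd_le.isCoboundedUnder_ge (by linarith)
    obtain ⟨n, hngood, ⟨hnB, hnx₂⟩, hn1⟩ := (hfreq.and_eventually hevN).exists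
    have hn0R : (0:ℝ) < n := by exact_mod_cast hn1
    have hn1R : (1:ℝ) ≤ (n:ℝ) := by exact_mod_cast hn1
    have hgood' : a n ≤ (L + ε/4) * n := by
      rw [div_lt_iff₀ hn0R] at hngood; linarith only [hngood]
    -- the base threshold n₁
    set n₁ : ℕ := max (max ⌈x₂⌉₊ ⌈36*C*(n:ℝ)/(lam*ε)⌉₊) ⌈3*(n:ℝ)/lam⌉₊ with hn₁def
    have hx₂n₁ : x₂ ≤ (n₁:ℝ) :=
      le_trans (Nat.le_ceil x₂) (Nat.cast_le.2 (le_trans (le_max_left _ _) (le_max_left _ _)))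
    have h36n₁ : 36*C*(n:ℝ)/(lam*ε) ≤ (n₁:ℝ) :=
      le_trans (Nat.le_ceil _) (Nat.cast_le.2 (le_trans (le_max_right _ _) (le_max_left _ _)))
    have h3n₁ : 3*(n:ℝ)/lam ≤ (n₁:ℝ) :=
      le_trans (Nat.le_ceil _) (Nat.cast_le.2 (le_max_right _ _))
    have hn₁1 : 1 ≤ n₁ := by
      have : (1:ℝ) ≤ (n₁:ℝ) := le_trans hx₂1 hx₂n₁
      exact_mod_cast this
    have hn₁ub : (n₁:ℝ) ≤ c₁*(n:ℝ) + d₁ := by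
      have hcn : 0 ≤ c₁*(n:ℝ) := mul_nonneg hc₁0 (Nat.cast_nonneg n)
      have e1 : ((⌈x₂⌉₊:ℕ):ℝ) ≤ c₁*(n:ℝ) + d₁ := by
        have := (Nat.ceil_lt_add_one (by linarith : (0:ℝ) ≤ x₂)).le
        rw [hd₁def]; linarith only [this, hcn]
      have e2 : ((⌈36*C*(n:ℝ)/(lam*ε)⌉₊:ℕ):ℝ) ≤ c₁*(n:ℝ) + d₁ := by
        have h := (Nat.ceil_lt_add_one (by positivity : (0:ℝ) ≤ 36*C*(n:ℝ)/(lam*ε))).le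
        have heq : c₁*(n:ℝ) = 36*C*(n:ℝ)/(lam*ε) + 3/lam*(n:ℝ) := by
          rw [hc₁def]; ring
        have h3 : 0 ≤ 3/lam*(n:ℝ) := by positivity
        rw [hd₁def]; linarith only [h, heq, h3, hx₂1]
      have e3 : ((⌈3*(n:ℝ)/lam⌉₊:ℕ):ℝ) ≤ c₁*(n:ℝ) + d₁ := by
        have h := (Nat.ceil_lt_add_one (by positivity : (0:ℝ) ≤ 3*(n:ℝ)/lam)).le
        have heq : c₁*(n:ℝ) = 36*C*(n:ℝ)/(lam*ε) + 3*(n:ℝ)/lam := by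
          rw [hc₁def]; ring
        have h36 : 0 ≤ 36*C*(n:ℝ)/(lam*ε) := by positivity
        rw [hd₁def]; linarith only [h, heq, h36, hx₂1]
      rw [hn₁def]
      push_cast [Nat.cast_max]
      exact max_le (max_le e1 e2) e3
    set B₀ : ℝ := (t*(n:ℝ))^(1/p) with hB₀def
    have hB₀0 : 0 ≤ B₀ := Real.rpow_nonneg (by positivity) _
    have hB₀q : B₀^q = (t*(n:ℝ))^(q/p) := by
      rw [hB₀def, ← Real.rpow_mul (by positivity : (0:ℝ) ≤ t*(n:ℝ))]
      congr 1
      field_simp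
    have hn₁B₀q : (n₁:ℝ) ≤ B₀^q := by rw [hB₀q]; exact le_trans hn₁ub hnB
    have hℓ0 : 0 ≤ L + ε/4 := by linarith
    -- main induction
    have main : ∀ N : ℕ, n₁ ≤ N → a N ≤ (L + ε/2) * N - (N:ℝ)^q := by
      intro N
      induction N using Nat.strong_induction_on with
      | _ N IH =>
      intro hN
      have hNx₂ : x₂ ≤ (N:ℝ) := le_trans hx₂n₁ (by exact_mod_cast hN)
      obtain ⟨⟨hN1, hN4⟩, hN12ε, hN8lam, hN8, hN2C⟩ := hx₂ (N:ℝ) hNx₂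
      have hN0 : (0:ℝ) < N := lt_of_lt_of_le one_pos hN1
      have hNsplit : (N:ℝ)^q * (N:ℝ)^(1-q) = N := by
        rw [← Real.rpow_add hN0]
        norm_num
      have hNq_pos : 0 < (N:ℝ)^q := Real.rpow_pos_of_pos hN0 q
      have f8 : (N:ℝ)^q ≤ ε/12 * N := by
        have h := mul_le_mul_of_nonneg_left hN12ε hNq_pos.le
        rw [hNsplit] at h
        have h2 : (N:ℝ)^q * (12/ε) * ε ≤ (N:ℝ) * ε :=
          mul_le_mul_of_nonneg_right h hε.le
        have h3 : (N:ℝ)^q * (12/ε) * ε = 12 * (N:ℝ)^q := by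
          field_simp
        rw [h3] at h2
        linarith only [h2]
      by_cases hcase : (N:ℝ) ≤ B₀
      · -- BASE CASE : use the good block n directly, seed bounded by hlin
        set Smin : ℕ := ⌊(n:ℝ)/lam⌋₊ + 1 with hSmindef
        have hSmin_lb : (n:ℝ)/lam < Smin := by
          rw [hSmindef]; push_cast; exact Nat.lt_floor_add_one _
        have hSmin_ub : (Smin:ℝ) ≤ (n:ℝ)/lam + 1 := by
          rw [hSmindef]; push_cast
          have := Nat.floor_le (by positivity : (0:ℝ) ≤ (n:ℝ)/lam)
          linarith only [this]
        have hnl : (1:ℝ) ≤ (n:ℝ)/lam := by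
          rw [le_div_iff₀ hlam0]; linarith only [hlam1, hn1R]
        have hnn : (n:ℝ) ≤ (n:ℝ)/lam := by
          have h := mul_le_mul_of_nonneg_left hlam1.le (Nat.cast_nonneg n)
          rw [le_div_iff₀ hlam0]; linarith only [h]
        have hNn₁ : (n₁:ℝ) ≤ (N:ℝ) := by exact_mod_cast hN
        have hSminN : Smin ≤ N := by
          have h1 : (Smin:ℝ) ≤ (N:ℝ) := by
            have h2 : 3*(n:ℝ)/lam = 3*((n:ℝ)/lam) := by ring
            rw [h2] at h3n₁
            linarith only [hSmin_ub, hnl, h3n₁, hNn₁]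
          exact_mod_cast h1
        obtain ⟨k, S0, hdec, hS0lb, hS0ub⟩ := decomp n Smin N hn1 hSminN
        have hS0₁ : 1 ≤ S0 := le_trans (by omega) hS0lb
        have hS0R : (n:ℝ)/lam < (S0:ℝ) := lt_of_lt_of_le hSmin_lb (by exact_mod_cast hS0lb)
        have hlamS0 : (n:ℝ) ≤ lam * S0 := by
          rw [div_lt_iff₀ hlam0] at hS0R; linarith only [hS0R]
        have hNp_tn : (N:ℝ)^p ≤ t*(n:ℝ) := by
          have h1 : (N:ℝ)^p ≤ B₀^p := Real.rpow_le_rpow (Nat.cast_nonneg N) hcase hp0.le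
          have h2 : B₀^p = t*(n:ℝ) := by
            rw [hB₀def, ← Real.rpow_mul (by positivity : (0:ℝ) ≤ t*(n:ℝ))]
            rw [one_div, inv_mul_cancel₀ hp0.ne', Real.rpow_one]
          rwa [h2] at h1
        have hNp_n : (N:ℝ)^p ≤ (n:ℝ) := by
          have h := mul_le_mul_of_nonneg_right ht1 (Nat.cast_nonneg n)
          linarith only [h, hNp_tn]
        have hcore' : a N ≤ a S0 + k*(a n) + C*k*(N:ℝ)^p := by
          have h := core hlam0 hp0 hC.le hsub k n S0 hn1 hS0₁ hlamS0
            (by rw [← hdec]; exact hNp_n)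
          rw [← hdec] at h
          exact h
        have hdecR : (N:ℝ) = (S0:ℝ) + (k:ℝ)*(n:ℝ) := by exact_mod_cast hdec
        have hk0 : (0:ℝ) ≤ (k:ℝ) := Nat.cast_nonneg k
        have hknN : (k:ℝ)*(n:ℝ) ≤ (N:ℝ) := by
          have h : (0:ℝ) ≤ (S0:ℝ) := Nat.cast_nonneg S0
          linarith only [h, hdecR]
        have hS0r : (S0:ℝ) ≤ 3*(n:ℝ)/lam := by
          have h1 : (S0:ℝ) < (Smin:ℝ) + (n:ℝ) := by exact_mod_cast hS0ub
          have h2 : 3*(n:ℝ)/lam = 3*((n:ℝ)/lam) := by ring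
          rw [h2]
          linarith only [h1, hSmin_ub, hnl, hnn]
        have fS0 : C * (S0:ℝ) ≤ ε/12 * N := by
          have h1 : C * (S0:ℝ) ≤ C * (3*(n:ℝ)/lam) :=
            mul_le_mul_of_nonneg_left hS0r hC.le
          have h2 : C * (3*(n:ℝ)/lam) = ε/12 * (36*C*(n:ℝ)/(lam*ε)) := by
            field_simp; ring
          have h3 : ε/12 * (36*C*(n:ℝ)/(lam*ε)) ≤ ε/12 * N :=
            mul_le_mul_of_nonneg_left (le_trans h36n₁ hNn₁) (by positivity)
          linarith only [h1, h2, h3]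
        have fkn : C*(k:ℝ)*(N:ℝ)^p ≤ ε/12 * N := by
          have hCNp : C*(N:ℝ)^p ≤ ε/12*(n:ℝ) := by
            have h1 : C*(N:ℝ)^p ≤ C*(t*(n:ℝ)) := mul_le_mul_of_nonneg_left hNp_tn hC.le
            have h2 : C*(t*(n:ℝ)) ≤ C*((ε/(12*C))*(n:ℝ)) := by
              apply mul_le_mul_of_nonneg_left _ hC.le
              exact mul_le_mul_of_nonneg_right htε (Nat.cast_nonneg n)
            have h3 : C*((ε/(12*C))*(n:ℝ)) = ε/12*(n:ℝ) := by
              field_simp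
            linarith only [h1, h2, h3]
          have h4 : (k:ℝ)*(C*(N:ℝ)^p) ≤ (k:ℝ)*(ε/12*(n:ℝ)) :=
            mul_le_mul_of_nonneg_left hCNp hk0
          have h5 : ε/12*((k:ℝ)*(n:ℝ)) ≤ ε/12*(N:ℝ) :=
            mul_le_mul_of_nonneg_left hknN (by positivity)
          linarith only [h4, h5]
        have faS0 : a S0 ≤ C * S0 := hlin S0 hS0₁
        have fkan : (k:ℝ)*(a n) ≤ (L+ε/4)*((k:ℝ)*(n:ℝ)) := by
          have h := mul_le_mul_of_nonneg_left hgood' hk0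
          linarith only [h]
        have fla : (L+ε/4)*((k:ℝ)*(n:ℝ)) ≤ (L+ε/4)*(N:ℝ) :=
          mul_le_mul_of_nonneg_left hknN hℓ0
        linarith only [hcore', faS0, fS0, fkan, fla, fkn, f8]
      · -- STEP CASE : use a block of size ≈ N^q and the inductive hypothesis
        push_neg at hcase
        set m : ℕ := ⌈(N:ℝ)^q⌉₊ with hmdef
        have hmq : (N:ℝ)^q ≤ (m:ℝ) := Nat.le_ceil _
        have hNq1 : (1:ℝ) ≤ (N:ℝ)^q := Real.one_le_rpow hN1 (by linarith)
        have hm2 : (m:ℝ) ≤ 2*(N:ℝ)^q := by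
          have h := (Nat.ceil_lt_add_one (Real.rpow_nonneg (Nat.cast_nonneg N) q)).le
          rw [hmdef]
          linarith only [h, hNq1]
        have hBq : B₀^q ≤ (N:ℝ)^q := Real.rpow_le_rpow hB₀0 hcase.le (by linarith)
        have hn₁m : n₁ ≤ m := by
          have : (n₁:ℝ) ≤ (m:ℝ) := le_trans hn₁B₀q (le_trans hBq hmq)
          exact_mod_cast this
        have hm1 : 1 ≤ m := le_trans hn₁1 hn₁m
        have hm0R : (0:ℝ) < m := by exact_mod_cast hm1
        set Smin : ℕ := ⌊(m:ℝ)/lam⌋₊ + 1 with hSmindef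
        have hSmin_lb : (m:ℝ)/lam < Smin := by
          rw [hSmindef]; push_cast; exact Nat.lt_floor_add_one _
        have hSmin_ub : (Smin:ℝ) ≤ (m:ℝ)/lam + 1 := by
          rw [hSmindef]; push_cast
          have := Nat.floor_le (by positivity : (0:ℝ) ≤ (m:ℝ)/lam)
          linarith only [this]
        have hNqlam : 8*(1+1/lam)*(N:ℝ)^q ≤ (N:ℝ) := by
          have h := mul_le_mul_of_nonneg_left hN8lam hNq_pos.le
          linarith only [h, hNsplit]
        have hlam1' : (1:ℝ) ≤ 1/lam := by
          rw [le_div_iff₀ hlam0]; linarith only [hlam1]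
        have hSm_half : (Smin:ℝ) + (m:ℝ) ≤ (N:ℝ)/2 := by
          have e1 : (m:ℝ)/lam ≤ 2*(N:ℝ)^q*(1/lam) := by
            rw [div_eq_mul_one_div]
            exact mul_le_mul_of_nonneg_right hm2 (by positivity)
          have e2 : 2*(N:ℝ)^q*(1/lam) + 2*(N:ℝ)^q ≤ (N:ℝ)/4 := by
            linarith only [hNqlam]
          have e3 : (1:ℝ) ≤ (N:ℝ)/4 := by linarith only [hN4]
          linarith only [hSmin_ub, e1, e2, e3, hm2]
        have hSminN : Smin ≤ N := by
          have h1 : (Smin:ℝ) ≤ (N:ℝ) := by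
            linarith only [hSm_half, hm0R.le, hN0.le]
          exact_mod_cast h1
        obtain ⟨k, S0, hdec, hS0lb, hS0ub⟩ := decomp m Smin N hm1 hSminN
        have hS0₁ : 1 ≤ S0 := le_trans (by omega) hS0lb
        have hS0R : (m:ℝ)/lam < (S0:ℝ) := lt_of_lt_of_le hSmin_lb (by exact_mod_cast hS0lb)
        have hlamS0 : (m:ℝ) ≤ lam * S0 := by
          rw [div_lt_iff₀ hlam0] at hS0R; linarith only [hS0R]
        have hS0half : (S0:ℝ) ≤ (N:ℝ)/2 := by
          have h1 : (S0:ℝ) < (Smin:ℝ) + (m:ℝ) := by exact_mod_cast hS0ub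
          linarith only [h1, hSm_half]
        have hdecR : (N:ℝ) = (S0:ℝ) + (k:ℝ)*(m:ℝ) := by exact_mod_cast hdec
        have hkm : (N:ℝ)/2 ≤ (k:ℝ)*(m:ℝ) := by linarith only [hdecR, hS0half]
        have hk0 : (0:ℝ) ≤ (k:ℝ) := Nat.cast_nonneg k
        have hNp_m : (N:ℝ)^p ≤ (m:ℝ) :=
          le_trans (Real.rpow_le_rpow_of_exponent_le hN1 hpq.le) hmq
        have hcore' : a N ≤ a S0 + k*(a m) + C*k*(N:ℝ)^p := by
          have h := core hlam0 hp0 hC.le hsub k m S0 hm1 hS0₁ hlamS0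
            (by rw [← hdec]; exact hNp_m)
          rw [← hdec] at h
          exact h
        have hS0ltN : S0 < N := by
          have : (S0:ℝ) < (N:ℝ) := by linarith only [hS0half, hN0]
          exact_mod_cast this
        have hmltN : m < N := by
          have h16 : (N:ℝ)^q * 1 ≤ (N:ℝ)^q * (1/lam) :=
            mul_le_mul_of_nonneg_left hlam1' hNq_pos.le
          have : (m:ℝ) < (N:ℝ) := by linarith only [hm2, hNqlam, h16, hN0]
          exact_mod_cast this
        have hmS0 : m ≤ S0 := by
          have h1 : (m:ℝ)*lam ≤ (m:ℝ)*1 := mul_le_mul_of_nonneg_left hlam1.le hm0R.le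
          have h2 : (m:ℝ) ≤ (m:ℝ)/lam := by
            rw [le_div_iff₀ hlam0]; linarith only [h1]
          have : (m:ℝ) < (S0:ℝ) := lt_of_le_of_lt h2 hS0R
          exact_mod_cast this.le
        have hIH_S0 := IH S0 hS0ltN (le_trans hn₁m hmS0)
        have hIH_m := IH m hmltN hn₁m
        have haS0 : a S0 ≤ (L+ε/2) * S0 := by
          have h := Real.rpow_nonneg (Nat.cast_nonneg S0) q
          linarith only [hIH_S0, h]
        have hP1 : 2*C*(N:ℝ)^p ≤ (m:ℝ)^q := by
          have h1 : 2*C*(N:ℝ)^p ≤ (N:ℝ)^(q^2-p)*(N:ℝ)^p :=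
            mul_le_mul_of_nonneg_right hN2C (Real.rpow_nonneg (Nat.cast_nonneg N) p)
          have h2 : (N:ℝ)^(q^2-p)*(N:ℝ)^p = (N:ℝ)^(q^2) := by
            rw [← Real.rpow_add hN0]; congr 1; ring
          have h3 : (N:ℝ)^(q^2) = ((N:ℝ)^q)^q := by
            rw [← Real.rpow_mul (Nat.cast_nonneg N)]; congr 1; ring
          have h4 : ((N:ℝ)^q)^q ≤ (m:ℝ)^q :=
            Real.rpow_le_rpow (Real.rpow_nonneg (Nat.cast_nonneg N) q) hmq (by linarith)
          rw [h2, h3] at h1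
          linarith only [h1, h4]
        have hmsplit : (m:ℝ)^q * (m:ℝ)^(1-q) = m := by
          rw [← Real.rpow_add hm0R]; norm_num
        have hm1q_pos : (0:ℝ) < (m:ℝ)^(1-q) := Real.rpow_pos_of_pos hm0R _
        have hP2 : 2*(N:ℝ)^q ≤ (k:ℝ)*(m:ℝ)^q := by
          have e1 : (m:ℝ)^(1-q) ≤ (2*(N:ℝ)^q)^(1-q) :=
            Real.rpow_le_rpow hm0R.le hm2 h1q.le
          have e2 : (2*(N:ℝ)^q)^(1-q) = (2:ℝ)^(1-q) * ((N:ℝ)^q)^(1-q) :=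
            Real.mul_rpow (by norm_num) (Real.rpow_nonneg (Nat.cast_nonneg N) q)
          have e3 : (2:ℝ)^(1-q) ≤ 2 := by
            have h := Real.rpow_le_rpow_of_exponent_le (by norm_num : (1:ℝ) ≤ 2)
              (by linarith : 1-q ≤ 1)
            rwa [Real.rpow_one] at h
          have e4 : ((N:ℝ)^q)^(1-q) = (N:ℝ)^(q*(1-q)) := by
            rw [← Real.rpow_mul (Nat.cast_nonneg N)]
          have e5 : (m:ℝ)^(1-q) ≤ 2*(N:ℝ)^(q*(1-q)) := by
            have h := mul_le_mul_of_nonneg_right e3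
              (Real.rpow_nonneg (Nat.cast_nonneg N) (q*(1-q)))
            rw [e2, e4] at e1
            linarith only [e1, h]
          have e6 : (N:ℝ)^q * (N:ℝ)^(q*(1-q)) = (N:ℝ)^(2*q-q^2) := by
            rw [← Real.rpow_add hN0]; congr 1; ring
          have e7 : (N:ℝ)^(2*q-q^2) * (N:ℝ)^((1-q)^2) = (N:ℝ) := by
            rw [← Real.rpow_add hN0]
            have h : 2*q-q^2 + (1-q)^2 = 1 := by ring
            rw [h, Real.rpow_one]
          have e8 : 8 * (N:ℝ)^(2*q-q^2) ≤ (N:ℝ) := by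
            have h := mul_le_mul_of_nonneg_left hN8
              (Real.rpow_nonneg (Nat.cast_nonneg N) (2*q-q^2))
            linarith only [h, e7]
          have eA : 2*(N:ℝ)^q * (m:ℝ)^(1-q) ≤ (k:ℝ)*(m:ℝ) := by
            have h1 : 2*(N:ℝ)^q * (m:ℝ)^(1-q) ≤ 2*(N:ℝ)^q * (2*(N:ℝ)^(q*(1-q)))  :=
              mul_le_mul_of_nonneg_left e5 (by positivity)
            have h2 : 2*(N:ℝ)^q * (2*(N:ℝ)^(q*(1-q))) = 4*(N:ℝ)^(2*q-q^2) := by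
              rw [show 2*(N:ℝ)^q * (2*(N:ℝ)^(q*(1-q))) = 4*((N:ℝ)^q * (N:ℝ)^(q*(1-q))) by ring,
                e6]
            have h3 : 4*(N:ℝ)^(2*q-q^2) ≤ (N:ℝ)/2 := by linarith only [e8]
            linarith only [h1, h2, h3, hkm]
          have eB : (k:ℝ)*(m:ℝ) = ((k:ℝ)*(m:ℝ)^q) * (m:ℝ)^(1-q) := by
            rw [mul_assoc, hmsplit]
          rw [eB] at eA
          exact le_of_mul_le_mul_right eA hm1q_pos
        have hkam : (k:ℝ)*(a m) ≤ (k:ℝ)*((L+ε/2)*m - (m:ℝ)^q) :=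
          mul_le_mul_of_nonneg_left hIH_m hk0
        have hkP1 : (k:ℝ)*(2*C*(N:ℝ)^p) ≤ (k:ℝ)*(m:ℝ)^q :=
          mul_le_mul_of_nonneg_left hP1 hk0
        have hlN : (L+ε/2)*(N:ℝ) = (L+ε/2)*(S0:ℝ) + (L+ε/2)*((k:ℝ)*(m:ℝ)) := by
          rw [hdecR]; ring
        linarith only [hcore', haS0, hkam, hkP1, hP2, hlN]
    -- conclude
    filter_upwards [eventually_ge_atTop (max n₁ 1)] with N hNge
    have h1 : n₁ ≤ N := le_trans (le_max_left _ _) hNge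
    have h2 : 1 ≤ N := le_trans (le_max_right _ _) hNge
    have hN0 : (0:ℝ) < N := by exact_mod_cast h2
    have hm := main N h1
    rw [div_le_iff₀ hN0]
    have hq0' : (0:ℝ) ≤ (N:ℝ)^q := Real.rpow_nonneg (Nat.cast_nonneg N) q
    linarith only [hm, hq0', mul_pos hε hN0]

  refine ⟨L, tendsto_of_liminf_eq_limsup hLdef.symm ?_ hbdd_le hbdd_ge⟩
  apply le_antisymm
  · refine le_of_forall_pos_le_add fun ε hε => ?_
    exact Filter.limsup_le_of_le hbdd_ge.isCoboundedUnder_le (key ε hε)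
  · exact Filter.liminf_le_limsup hbdd_le hbdd_ge
end

section
/- Let f, g : ℕ → ℕ be non-decreasing functions and suppose there exists n₀ ∈ ℕ such that f(n) > n and g(n) ≥ f(f(n)) for all n ≥ n₀. Let (b_n)_{n∈ℕ} be a sequence of real numbers and let χ > 0, and suppose that for every sequence (n_k)_{k∈ℕ} of positive integers with n_k → ∞ and f(n_k) ≤ n_{k+1} ≤ g(n_k) for each k, one has lim_{k→∞} b_{n_k} = χ. Then lim_{n→∞} b_n = χ. -/
/-- Let `f, g : ℕ → ℕ` be non-decreasing with `f(n) > n` and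
`g(n) ≥ f(f(n))` for all `n ≥ n₀`. If `(b_n)` is a real sequence and `χ > 0` is such that
`b_{n_k} → χ` for every sequence `(n_k)` of positive integers with `n_k → ∞` and
`f(n_k) ≤ n_{k+1} ≤ g(n_k)` for each `k`, then `b_n → χ`. -/
theorem limit_from_sparse_subsequences (f g : ℕ → ℕ) (hf : Monotone f) (hg : Monotone g)
    (n₀ : ℕ) (h₀ : ∀ n, n₀ ≤ n → n < f n ∧ f (f n) ≤ g n)
    (b : ℕ → ℝ) (χ : ℝ) (hχ : 0 < χ)
    (hsubseq : ∀ nk : ℕ → ℕ, (∀ k, 1 ≤ nk k) →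
      Filter.Tendsto nk Filter.atTop Filter.atTop →
      (∀ k, f (nk k) ≤ nk (k + 1) ∧ nk (k + 1) ≤ g (nk k)) →
      Filter.Tendsto (fun k => b (nk k)) Filter.atTop (nhds χ)) :
    Filter.Tendsto b Filter.atTop (nhds χ) := by
  have hlt : ∀ n, n₀ ≤ n → n < f n := fun n hn => (h₀ n hn).1
  have hffg : ∀ n, n₀ ≤ n → f (f n) ≤ g n := fun n hn => (h₀ n hn).2
  have hfle : ∀ n, n₀ ≤ n → f n ≤ g n := fun n hn =>
    le_trans (hf (le_of_lt (hlt n hn))) (hffg n hn)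
  apply Filter.tendsto_of_subseq_tendsto
  intro ns hns
  have hex : ∀ N : ℕ, ∃ j, N ≤ ns j := fun N => (hns.eventually_ge_atTop N).exists
  choose idx hidx using hex
  set M := max n₀ 1 with hM
  let ms : ℕ → ℕ := fun k => Nat.rec (idx M) (fun _ prev => idx (g (ns prev) + 1)) k
  set p : ℕ → ℕ := fun k => ns (ms k) with hp
  have hp0 : M ≤ p 0 := hidx M
  have hpstep : ∀ k, g (p k) < p (k + 1) := fun k =>
    Nat.lt_of_succ_le (hidx (g (ns (ms k)) + 1))
  -- p k ≥ n₀ and strictly increasing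
  have hpge : ∀ k, n₀ ≤ p k := by
    intro k
    induction k with
    | zero => exact le_trans (le_max_left _ _) hp0
    | succ k ih =>
      have : p k < p (k + 1) := lt_of_le_of_lt
        (le_trans (le_of_lt (hlt _ ih)) (le_trans (le_of_lt (hlt _ (le_trans ih (le_of_lt (hlt _ ih))))) (hffg _ ih))) (hpstep k)
      omega
  have hpmono : StrictMono p := by
    apply strictMono_nat_of_lt_succ
    intro k
    have ih := hpge k
    exact lt_of_le_of_lt
      (le_trans (le_of_lt (hlt _ ih)) (le_trans (le_of_lt (hlt _ (le_trans ih (le_of_lt (hlt _ ih))))) (hffg _ ih))) (hpstep k)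
  have hpex : ∀ v : ℕ, ∃ k, v < p k := by
    intro v
    exact ⟨v + 1, lt_of_lt_of_le (Nat.lt_succ_self v) (hpmono.le_apply)⟩
  set T : ℕ → ℕ := fun v => p (Nat.find (hpex v)) with hT
  have hTspec : ∀ v k, p k ≤ v → v < p (k + 1) → T v = p (k + 1) := by
    intro v k h1 h2
    have : Nat.find (hpex v) = k + 1 := by
      rw [Nat.find_eq_iff]
      refine ⟨h2, fun j hj hc => ?_⟩
      exact absurd (lt_of_lt_of_le hc (hpmono.monotone (by omega : j ≤ k))) (not_lt.2 h1)
    simp only [hT, this]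
  set c : ℕ → ℕ := fun n => Nat.rec (p 0)
    (fun _ v => if f v ≤ T v ∧ T v ≤ g v then T v else f v) n with hc
  have hcsucc : ∀ n, c (n + 1) = if f (c n) ≤ T (c n) ∧ T (c n) ≤ g (c n) then T (c n) else f (c n) := fun n => rfl
  have hcge : ∀ n, n₀ ≤ c n := by
    intro n
    induction n with
    | zero => exact hpge 0
    | succ n ih =>
      rw [hcsucc]
      split
      · rename_i h
        exact le_trans ih (le_trans (le_of_lt (hlt _ ih)) h.1)
      · exact le_trans ih (le_of_lt (hlt _ ih))
  have hcstep : ∀ n, f (c n) ≤ c (n + 1) ∧ c (n + 1) ≤ g (c n) := by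
    intro n
    rw [hcsucc]
    split
    · rename_i h; exact h
    · exact ⟨le_refl _, hfle _ (hcge n)⟩
  have hcmono : StrictMono c := by
    apply strictMono_nat_of_lt_succ
    intro n
    exact lt_of_lt_of_le (hlt _ (hcge n)) (hcstep n).1
  -- key: every target is hit
  have hit : ∀ k n, c n = p k → ∃ m, n < m ∧ c m = p (k + 1) := by
    intro k n hn
    set q := p (k + 1) with hq
    have aux : ∀ d j, p k ≤ c j → c j < q →
        (c j = p k ∨ ∃ v, n₀ ≤ v ∧ c j = f v ∧ g v < q) → q - c j ≤ d →
        ∃ m, j < m ∧ c m = q := by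
      intro d
      induction d with
      | zero => intro j h1 h2 _ h4; omega
      | succ d ih =>
        intro j h1 h2 hinv h4
        have hTj : T (c j) = q := hTspec (c j) k h1 h2
        by_cases hcond : f (c j) ≤ T (c j) ∧ T (c j) ≤ g (c j)
        · refine ⟨j + 1, Nat.lt_succ_self j, ?_⟩
          rw [hcsucc, if_pos hcond, hTj]
        · have hstep : c (j + 1) = f (c j) := by rw [hcsucc, if_neg hcond]
          have hflt : f (c j) < q ∨ f (c j) = q ∨ q < f (c j) := by omega
          rcases hflt with hflt | hfeq | hfgt
          ·
            have hgcj : g (c j) < q := by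
              by_contra hge
              exact hcond ⟨le_of_lt (by rw [hTj]; exact hflt), by rw [hTj]; omega⟩
            have hlt1 : c j < c (j + 1) := hcmono (Nat.lt_succ_self j)
            have h6 : q - c (j + 1) ≤ d := by omega
            obtain ⟨m, hm1, hm2⟩ := ih (j + 1)
              (le_trans h1 (le_of_lt hlt1)) (by omega)
              (Or.inr ⟨c j, hcge j, hstep, hgcj⟩) h6
            exact ⟨m, by omega, hm2⟩
          · exact ⟨j + 1, Nat.lt_succ_self j, by omega⟩
          · exfalso
            rcases hinv with heq | ⟨v, hv, hcv, hgv⟩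
            · have : f (c j) ≤ g (p k) := heq ▸ hfle _ (heq ▸ hcge j)
              have := hpstep k
              omega
            · have : f (c j) ≤ g v := hcv ▸ hffg v hv
              omega
    have h1 : p k ≤ c n := le_of_eq hn.symm
    have h2 : c n < q := hn ▸ hpmono (Nat.lt_succ_self k)
    obtain ⟨m, hm1, hm2⟩ := aux (q - c n) n h1 h2 (Or.inl hn) (le_refl _)
    exact ⟨m, hm1, hm2⟩
  -- build φ
  let F : ∀ k : ℕ, {m : ℕ // c m = p k} := fun k => Nat.rec ⟨0, rfl⟩
    (fun k prev => ⟨(hit k prev.1 prev.2).choose, (hit k prev.1 prev.2).choose_spec.2⟩) k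
  have hFmono : StrictMono (fun k => (F k).1) := by
    apply strictMono_nat_of_lt_succ
    intro k
    exact (hit k (F k).1 (F k).2).choose_spec.1
  have hbc : Filter.Tendsto (fun j => b (c j)) Filter.atTop (nhds χ) := by
    apply hsubseq c
    · intro k
      have : c 0 ≤ c k := hcmono.monotone (Nat.zero_le k)
      have : (1 : ℕ) ≤ p 0 := le_trans (le_max_right _ _) hp0
      have hc0 : c 0 = p 0 := rfl
      omega
    · exact hcmono.tendsto_atTop
    · exact hcstep
  refine ⟨ms, ?_⟩
  have : (fun n => b (ns (ms n))) = (fun j => b (c j)) ∘ (fun k => (F k).1) := by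
    funext k
    simp only [Function.comp]
    rw [(F k).2]
  rw [this]
  exact hbc.comp hFmono.tendsto_atTop
end
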